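/- Let σ>0, ρ(x)=(σ√(2π))^{-1}·exp(-x²/(2σ²)) for x∈ℝ, and for a with a²>2 set ν_a(t)=a·Φ_ρ^{-1}(t+1/2) on (-1/2,1/2), where Φ_ρ is the cumulative distribution function of ρ. Then for every f∈F_{1,∞}(ℝ), the function g_{f,ν_a}(t)=f(ν_a(t))ρ(ν_a(t))ν_a'(t) satisfies g_{f,ν_a}(0)=0 and ess sup_{t∈(-1/2,1/2)} |g_{f,ν_a}'(t)| ≤ √(2π)·σ·a²·(1 + (2/e)·(a²-1)/(a²-2))·‖f'‖_{L_∞(ℝ)}. Moreover, the function a ↦ a²·(1 + (2/e)·(a²-1)/(a²-2)) on (√2,∞) attains its minimum at a* = √(2 + 2/√(2+e)). -/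

import Mathlib

open MeasureTheory Set ENNReal intervalIntegral

set_option maxHeartbeats 1000000

private lemma aux_ue (u : ℝ) : u * Real.exp (-u) ≤ (Real.exp 1)⁻¹ := by
  rcases le_or_gt u 0 with h | h
  · have : u * Real.exp (-u) ≤ 0 :=
      mul_nonpos_of_nonpos_of_nonneg h (Real.exp_nonneg _)
    exact this.trans (by positivity)
  · have h1 : u ≤ Real.exp (u - 1) := by
      have := Real.add_one_le_exp (u - 1); linarith
    have h2 : Real.exp (u - 1) = Real.exp u * (Real.exp 1)⁻¹ := by
      rw [Real.exp_sub]; ring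
    have h3 : u * Real.exp (-u) ≤ Real.exp (u-1) * Real.exp (-u) := by
      apply mul_le_mul_of_nonneg_right h1 (Real.exp_nonneg _)
    have h4 : Real.exp (u-1) * Real.exp (-u) = (Real.exp 1)⁻¹ := by
      rw [h2]; rw [mul_comm (Real.exp u) _, mul_assoc, ← Real.exp_add]
      simp
    linarith

private lemma aux_C_nonneg {p : ℝ → ℝ} {C : ℝ} (hpb : ∀ᵐ w : ℝ, ‖p w‖ ≤ C) : 0 ≤ C := by
  obtain ⟨w, hw⟩ := hpb.exists
  exact (norm_nonneg _).trans hw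

private lemma aux_intInt_mul {p : ℝ → ℝ} {C : ℝ}
    (hpm : Measurable p) (hpb : ∀ᵐ w : ℝ, ‖p w‖ ≤ C)
    {q : ℝ → ℝ} (hq : Continuous q) (α β : ℝ) :
    IntervalIntegrable (fun w => p w * q w) volume α β := by
  have hC : 0 ≤ C := aux_C_nonneg hpb
  obtain ⟨D, hD⟩ := (isCompact_uIcc (a := α) (b := β)).exists_bound_of_continuousOn
    hq.continuousOn
  haveI : IsFiniteMeasure (volume.restrict (uIoc α β)) :=
    ⟨by rw [Measure.restrict_apply_univ]; exact measure_Ioc_lt_top⟩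
  rw [intervalIntegrable_iff]
  apply Integrable.mono' (integrable_const (C * D))
  · exact ((hpm.mul hq.measurable).aestronglyMeasurable)
  · have h1 : ∀ᵐ w ∂(volume.restrict (uIoc α β)), ‖p w‖ ≤ C := ae_restrict_of_ae hpb
    filter_upwards [h1, ae_restrict_mem measurableSet_uIoc] with w hw hmem
    have hqw : ‖q w‖ ≤ D := hD w (uIoc_subset_uIcc hmem)
    calc ‖p w * q w‖ = ‖p w‖ * ‖q w‖ := norm_mul _ _
      _ ≤ C * D := mul_le_mul hw hqw (norm_nonneg _) hC

private lemma aux_intInt_p {p : ℝ → ℝ} {C : ℝ}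
    (hpm : Measurable p) (hpb : ∀ᵐ w : ℝ, ‖p w‖ ≤ C) (α β : ℝ) :
    IntervalIntegrable p volume α β := by
  have h := aux_intInt_mul hpm hpb (q := fun _ => (1:ℝ)) continuous_const α β
  simpa only [mul_one] using h

private lemma tri_parts {p K K' : ℝ → ℝ} {C : ℝ}
    (hpm : Measurable p) (hpb : ∀ᵐ w : ℝ, ‖p w‖ ≤ C)
    (hK : ∀ z, HasDerivAt K (K' z) z) (hK'c : Continuous K')
    {y : ℝ} (hy : 0 ≤ y) :
    ∫ z in (0:ℝ)..y, (∫ w in (0:ℝ)..z, p w) * K' z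
      = (∫ w in (0:ℝ)..y, p w) * K y - ∫ w in (0:ℝ)..y, p w * K w := by
  have hC : 0 ≤ C := aux_C_nonneg hpb
  have hKc : Continuous K := by
    rw [continuous_iff_continuousAt]; exact fun z => (hK z).continuousAt
  set S : Set ℝ := Ioc (0:ℝ) y with hS
  have hpS : IntegrableOn p S := ((aux_intInt_p hpm hpb 0 y).1).mono_set
    (by rw [hS])
  have hK'S : IntegrableOn K' S := hK'c.integrableOn_Ioc
  have hswap :
      ∫ z in S, (∫ w in S, (Iic z).indicator p w) * K' z
        = ∫ w in S, ∫ z in S, (Iic z).indicator p w * K' z := by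
    have h1 : ∀ z, (∫ w in S, (Iic z).indicator p w) * K' z
        = ∫ w in S, (Iic z).indicator p w * K' z := by
      intro z; rw [← MeasureTheory.integral_mul_const]
    simp_rw [h1]
    apply MeasureTheory.integral_integral_swap
    have hbase : Integrable (fun q : ℝ × ℝ => K' q.1 * p q.2)
        ((volume.restrict S).prod (volume.restrict S)) :=
      Integrable.mul_prod hK'S hpS
    have hT : MeasurableSet {q : ℝ × ℝ | q.2 ≤ q.1} :=
      measurableSet_le measurable_snd measurable_fst
    have : Function.uncurry (fun z w => (Iic z).indicator p w * K' z)
        = {q : ℝ × ℝ | q.2 ≤ q.1}.indicator (fun q => K' q.1 * p q.2) := by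
      funext q
      by_cases h : q.2 ≤ q.1
      · simp [Function.uncurry, Set.indicator, h, mul_comm]
      · simp [Function.uncurry, Set.indicator, h]
    rw [this]
    exact hbase.indicator hT
  have hSmeas : MeasurableSet S := hS ▸ measurableSet_Ioc
  have hpKS : IntegrableOn (fun w => p w * K w) S :=
    ((aux_intInt_mul hpm hpb hKc 0 y).1).mono_set (by rw [hS])
  have step1 : ∫ z in S, (∫ w in (0:ℝ)..z, p w) * K' z
      = ∫ z in S, (∫ w in S, (Iic z).indicator p w) * K' z := by
    apply setIntegral_congr_fun hSmeas
    intro z hz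
    have hz' : z ∈ Ioc (0:ℝ) y := hS ▸ hz
    have h0z : (0:ℝ) ≤ z := le_of_lt hz'.1
    have hIoc_eq : Ioc (0:ℝ) z = S ∩ Iic z := by
      ext w
      simp only [mem_Ioc, hS, mem_inter_iff, mem_Iic]
      exact ⟨fun h => ⟨⟨h.1, h.2.trans hz'.2⟩, h.2⟩, fun h => ⟨h.1.1, h.2⟩⟩
    show (∫ w in (0:ℝ)..z, p w) * K' z = (∫ w in S, (Iic z).indicator p w) * K' z
    rw [integral_of_le h0z, setIntegral_indicator measurableSet_Iic, hIoc_eq]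
  have step2 : ∀ w ∈ S, (∫ z in S, (Iic z).indicator p w * K' z) = p w * (K y - K w) := by
    intro w hw
    show (∫ z in S, (Iic z).indicator p w * K' z) = p w * (K y - K w)
    have hwS : w ∈ Ioc (0:ℝ) y := hS ▸ hw
    have h1 : (fun z => (Iic z).indicator p w * K' z)
        = (Ici w).indicator (fun z => p w * K' z) := by
      funext z
      by_cases h : w ≤ z
      · simp [Set.indicator, h]
      · simp [Set.indicator, h]
    rw [h1, setIntegral_indicator measurableSet_Ici]
    have h2 : S ∩ Ici w = Icc w y := by
      ext z
      simp only [hS, mem_inter_iff, mem_Ioc, mem_Ici, mem_Icc]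
      exact ⟨fun h => ⟨h.2, h.1.2⟩, fun h => ⟨⟨lt_of_lt_of_le hwS.1 h.1, h.2⟩, h.1⟩⟩
    rw [h2, integral_Icc_eq_integral_Ioc, ← integral_of_le hwS.2, intervalIntegral.integral_const_mul,
      integral_eq_sub_of_hasDerivAt (fun z _ => hK z) (hK'c.intervalIntegrable _ _)]
  have step3 : ∫ w in S, p w * (K y - K w)
      = (∫ w in S, p w) * K y - ∫ w in S, p w * K w := by
    have h1 : ∀ w, p w * (K y - K w) = p w * K y - p w * K w := fun w => by ring
    simp_rw [h1]
    rw [integral_sub (hpS.mul_const _) hpKS, MeasureTheory.integral_mul_const]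
  rw [integral_of_le hy, integral_of_le hy, integral_of_le hy, ← hS]
  rw [step1, hswap, setIntegral_congr_fun hSmeas step2, step3]

private lemma parts_all {p K K' : ℝ → ℝ} {C : ℝ}
    (hpm : Measurable p) (hpb : ∀ᵐ w : ℝ, ‖p w‖ ≤ C)
    (hK : ∀ z, HasDerivAt K (K' z) z) (hK'c : Continuous K') (y : ℝ) :
    ∫ z in (0:ℝ)..y, (p z * K z + (∫ w in (0:ℝ)..z, p w) * K' z)
      = (∫ w in (0:ℝ)..y, p w) * K y := by
  have hKc : Continuous K := by
    rw [continuous_iff_continuousAt]; exact fun z => (hK z).continuousAt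
  have hparts : ∫ z in (0:ℝ)..y, (∫ w in (0:ℝ)..z, p w) * K' z
      = (∫ w in (0:ℝ)..y, p w) * K y - ∫ w in (0:ℝ)..y, p w * K w := by
    rcases le_or_gt 0 y with hy | hy
    · exact tri_parts hpm hpb hK hK'c hy
    · have hpb' : ∀ᵐ w : ℝ, ‖p (-w)‖ ≤ C := by
        rw [ae_iff] at hpb ⊢
        have hset : {w : ℝ | ¬ ‖p (-w)‖ ≤ C} = -{w : ℝ | ¬ ‖p w‖ ≤ C} := by
          ext w; simp [Set.mem_neg]
        rw [hset, Measure.measure_neg]; exact hpb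
      have hKn : ∀ z, HasDerivAt (fun z => K (-z)) (-K' (-z)) z := by
        intro z
        have := (hK (-z)).comp z (hasDerivAt_neg z)
        simpa [mul_comm, Function.comp_def] using this
      have hK'nc : Continuous (fun z : ℝ => -K' (-z)) := (hK'c.comp continuous_neg).neg
      have h := tri_parts (p := fun w => p (-w)) (hpm.comp measurable_neg) hpb' hKn
        hK'nc (by linarith : (0:ℝ) ≤ -y)
      have e2 : ∫ w in (0:ℝ)..(-y), p (-w) = -∫ w in (0:ℝ)..y, p w := by
        rw [integral_comp_neg p, neg_neg, neg_zero, integral_symm]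
      have e3 : ∫ w in (0:ℝ)..(-y), p (-w) * K (-w) = -∫ w in (0:ℝ)..y, p w * K w := by
        rw [integral_comp_neg (fun w => p w * K w), neg_neg, neg_zero, integral_symm]
      have e1 : ∫ z in (0:ℝ)..(-y), (∫ w in (0:ℝ)..z, p (-w)) * (-K' (-z))
          = -∫ z in (0:ℝ)..y, (∫ w in (0:ℝ)..z, p w) * K' z := by
        have e1a : ∀ z : ℝ, (∫ w in (0:ℝ)..z, p (-w)) * (-K' (-z))
            = (∫ w in (0:ℝ)..(-z), p w) * K' (-z) := by
          intro z
          have hz : ∫ w in (0:ℝ)..z, p (-w) = -∫ w in (0:ℝ)..(-z), p w := by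
            rw [integral_comp_neg p, neg_zero, integral_symm]
          rw [hz]; ring
        simp_rw [e1a]
        rw [integral_comp_neg (fun u => (∫ w in (0:ℝ)..u, p w) * K' u), neg_neg, neg_zero,
          integral_symm]
      simp only [neg_neg] at h
      rw [e1, e2, e3] at h
      linarith [h]
  have hF1c : Continuous (fun z => ∫ w in (0:ℝ)..z, p w) :=
    intervalIntegral.continuous_primitive (fun α β => aux_intInt_p hpm hpb α β) 0
  rw [integral_add (f := fun z => p z * K z) (g := fun z => (∫ w in (0:ℝ)..z, p w) * K' z)
    (aux_intInt_mul hpm hpb hKc 0 y)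
    ((hF1c.mul hK'c).intervalIntegrable 0 y), hparts]
  ring

private lemma opt_part :
    (Real.sqrt (2 + 2 / Real.sqrt (2 + Real.exp 1)) ∈ Ioi (Real.sqrt 2) ∧
      ∀ b ∈ Ioi (Real.sqrt 2),
        Real.sqrt (2 + 2 / Real.sqrt (2 + Real.exp 1)) ^ 2 *
            (1 + 2 / Real.exp 1 *
              (Real.sqrt (2 + 2 / Real.sqrt (2 + Real.exp 1)) ^ 2 - 1) /
              (Real.sqrt (2 + 2 / Real.sqrt (2 + Real.exp 1)) ^ 2 - 2)) ≤
          b ^ 2 * (1 + 2 / Real.exp 1 * (b ^ 2 - 1) / (b ^ 2 - 2))) := by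
  set E := Real.exp 1 with hE
  have hEpos : 0 < E := Real.exp_pos 1
  set c := Real.sqrt (2 + E) with hc
  have hcpos : 0 < c := Real.sqrt_pos.2 (by linarith)
  have hc2 : c ^ 2 = 2 + E := Real.sq_sqrt (by linarith)
  have hA2 : Real.sqrt (2 + 2 / c) ^ 2 = 2 + 2 / c :=
    Real.sq_sqrt (by positivity)
  constructor
  · have h2c : 0 < 2 / c := by positivity
    exact Real.sqrt_lt_sqrt (by norm_num) (by linarith)
  · intro b hb
    have hb' : Real.sqrt 2 < b := hb
    have hb2 : 2 < b ^ 2 := by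
      have h0 : (0:ℝ) ≤ Real.sqrt 2 := Real.sqrt_nonneg 2
      have : Real.sqrt 2 ^ 2 < b ^ 2 := by
        apply pow_lt_pow_left₀ hb' h0 (by norm_num)
      rwa [Real.sq_sqrt (by norm_num : (0:ℝ) ≤ 2)] at this
    rw [hA2]
    have hEc : E = c ^ 2 - 2 := by linarith
    have hu : 0 < b ^ 2 - 2 := by linarith
    have hc2ne : c ^ 2 - 2 ≠ 0 := by rw [← hEc]; positivity
    have hval : (2 + 2 / c) * (1 + 2 / E * ((2 + 2 / c) - 1) / ((2 + 2 / c) - 2)) =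
        2 * (c + 1) ^ 2 / (c ^ 2 - 2) := by
      have h1 : (2 + 2 / c) - 2 = 2 / c := by ring
      have h2 : 2 / E * ((2 + 2 / c) - 1) / (2 / c) = (c + 2) / (c ^ 2 - 2) := by
        rw [hEc, div_eq_div_iff (by positivity : (2:ℝ)/c ≠ 0) hc2ne]
        field_simp
        ring
      rw [h1, h2]
      field_simp
      ring
    have key : b ^ 2 * (1 + 2 / E * (b ^ 2 - 1) / (b ^ 2 - 2)) -
        (2 + 2 / c) * (1 + 2 / E * ((2 + 2 / c) - 1) / ((2 + 2 / c) - 2)) =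
        (c * (b ^ 2 - 2) - 2) ^ 2 / (E * (b ^ 2 - 2)) := by
      rw [hval, hEc]
      field_simp
      ring
    nlinarith [sq_nonneg (c * (b ^ 2 - 2) - 2), mul_pos hEpos hu,
      div_nonneg (sq_nonneg (c * (b ^ 2 - 2) - 2)) (le_of_lt (mul_pos hEpos hu))]

theorem gaussian_density_W1infty_bound_and_optimal_a
    (sigma : ℝ) (hsigma : 0 < sigma)
    (ρ : ℝ → ℝ)
    (hρ : ∀ x, ρ x = (sigma * Real.sqrt (2 * Real.pi))⁻¹ *
        Real.exp (-x ^ 2 / (2 * sigma ^ 2)))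
    (a : ℝ) (ha : 2 < a ^ 2)
    (Φ Φinv : ℝ → ℝ) (hΦ : ∀ x, Φ x = ∫ y in Iic x, ρ y)
    (hΦinv_right : ∀ t ∈ Ioo (0:ℝ) 1, Φ (Φinv t) = t)
    (hΦinv_left : ∀ x, Φinv (Φ x) = x)
    (ν ν' : ℝ → ℝ)
    (hν : ∀ t, ν t = a * Φinv (t + 1/2))
    (hν' : ∀ t, ν' t = a / ρ (Φinv (t + 1/2)))
    (f f' : ℝ → ℝ)
    (hf0 : f 0 = 0)
    (hf_int : ∀ x : ℝ, IntervalIntegrable f' volume 0 x)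
    (hf_repr : ∀ x : ℝ, f x = ∫ s in (0:ℝ)..x, f' s)
    (hf'Linf : MemLp f' ⊤ volume)
    (g : ℝ → ℝ) (hg : ∀ t, g t = f (ν t) * ρ (ν t) * ν' t) :
    (g 0 = 0 ∧
      ∃ g' : ℝ → ℝ,
        (∀ t ∈ Ioo (-(1/2) : ℝ) (1/2), IntervalIntegrable g' volume 0 t ∧
          g t = ∫ s in (0:ℝ)..t, g' s) ∧
        eLpNorm g' ⊤ (volume.restrict (Ioo (-(1/2) : ℝ) (1/2))) ≤
          ENNReal.ofReal (Real.sqrt (2 * Real.pi) * sigma * a ^ 2 *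
              (1 + 2 / Real.exp 1 * (a ^ 2 - 1) / (a ^ 2 - 2))) *
            eLpNorm f' ⊤ volume) ∧
    (Real.sqrt (2 + 2 / Real.sqrt (2 + Real.exp 1)) ∈ Ioi (Real.sqrt 2) ∧
      ∀ b ∈ Ioi (Real.sqrt 2),
        Real.sqrt (2 + 2 / Real.sqrt (2 + Real.exp 1)) ^ 2 *
            (1 + 2 / Real.exp 1 *
              (Real.sqrt (2 + 2 / Real.sqrt (2 + Real.exp 1)) ^ 2 - 1) /
              (Real.sqrt (2 + 2 / Real.sqrt (2 + Real.exp 1)) ^ 2 - 2)) ≤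
          b ^ 2 * (1 + 2 / Real.exp 1 * (b ^ 2 - 1) / (b ^ 2 - 2))) := by
  refine ⟨?_, opt_part⟩
  -- ## basic facts about ρ and Φ
  have ha0 : a ≠ 0 := by intro h; rw [h] at ha; norm_num at ha
  have ρ_pos : ∀ x, 0 < ρ x := fun x => by rw [hρ]; positivity
  have ρ_ne : ∀ x, ρ x ≠ 0 := fun x => (ρ_pos x).ne'
  have ρ_eq : ρ = fun x => (sigma * Real.sqrt (2*Real.pi))⁻¹ *
      Real.exp (-(1/(2*sigma^2)) * x^2) := by
    funext x; rw [hρ]; congr 1; congr 1; field_simp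
  have ρ_cont : Continuous ρ := by
    rw [ρ_eq]; fun_prop
  have ρ_int : Integrable ρ volume := by
    rw [ρ_eq]; exact (integrable_exp_neg_mul_sq (by positivity)).const_mul _
  have ρ_total : ∫ x, ρ x = 1 := by
    rw [ρ_eq, MeasureTheory.integral_const_mul, integral_gaussian]
    have h1 : Real.pi / (1/(2*sigma^2)) = (2*Real.pi) * sigma^2 := by
      field_simp
    have h2 : Real.sqrt (2*Real.pi*sigma^2) = Real.sqrt (2*Real.pi) * sigma := by
      rw [Real.sqrt_mul (by positivity) (sigma^2), Real.sqrt_sq hsigma.le]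
    rw [h1, h2]
    field_simp
  have hρ_even : ∀ x, ρ (-x) = ρ x := fun x => by rw [hρ, hρ]; norm_num
  have h_half : ∫ x in Iic (0:ℝ), ρ x = ∫ x in Ioi (0:ℝ), ρ x := by
    have h1 := integral_comp_neg_Iic (0:ℝ) ρ
    simp only [neg_zero] at h1
    calc ∫ x in Iic (0:ℝ), ρ x = ∫ x in Iic (0:ℝ), ρ (-x) :=
          (setIntegral_congr_fun measurableSet_Iic (fun x _ => (hρ_even x).symm))
      _ = ∫ x in Ioi (0:ℝ), ρ x := h1
  have hΦhalf : Φ 0 = 1/2 := by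
    have h2 := integral_Iic_add_Ioi (b := (0:ℝ)) (f := ρ) (μ := volume)
      ρ_int.integrableOn ρ_int.integrableOn
    rw [ρ_total] at h2
    rw [hΦ]
    linarith
  have Φ_deriv : ∀ x, HasDerivAt Φ (ρ x) x := by
    intro x
    have hsub : ∀ u : ℝ, Φ u = Φ 0 + ∫ s in (0:ℝ)..u, ρ s := by
      intro u
      have := integral_Iic_sub_Iic (f := ρ) (μ := volume) (a := (0:ℝ)) (b := u)
        ρ_int.integrableOn ρ_int.integrableOn
      rw [hΦ u, hΦ 0]
      linarith [this]
    have h0 : HasDerivAt (fun u => Φ 0 + ∫ s in (0:ℝ)..u, ρ s) (ρ x) x :=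
      (intervalIntegral.integral_hasDerivAt_right (ρ_cont.intervalIntegrable _ _)
        (ρ_cont.stronglyMeasurableAtFilter _ _) ρ_cont.continuousAt).const_add _
    exact h0.congr_of_eventuallyEq (Filter.Eventually.of_forall hsub)
  have Φ_mono : StrictMono Φ := by
    apply strictMono_of_deriv_pos
    intro x
    rw [(Φ_deriv x).deriv]
    exact ρ_pos x
  have Φ_diff : Differentiable ℝ Φ := fun x => (Φ_deriv x).differentiableAt
  -- ## constants
  have h21 : (0:ℝ) < a^2 - 1 := by linarith
  have h22 : (0:ℝ) < a^2 - 2 := by linarith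
  set c1 : ℝ := (a^2 - 1)/(2*sigma^2) with hc1def
  have hc1 : 0 < c1 := by rw [hc1def]; positivity
  set c2 : ℝ := (a^2 - 2)/(2*sigma^2) with hc2def
  have hc2 : 0 < c2 := by rw [hc2def]; positivity
  set K : ℝ → ℝ := fun y => Real.exp (-(c1 * y^2)) with hKdef
  set K' : ℝ → ℝ := fun y => (-(2*c1*y)) * Real.exp (-(c1*y^2)) with hK'def
  have hKd : ∀ y, HasDerivAt K (K' y) y := by
    intro y
    have h1 : HasDerivAt (fun t : ℝ => -(c1 * t^2)) (-(c1 * (2 * y^1))) y :=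
      ((hasDerivAt_pow 2 y).const_mul c1).neg
    have h2 := h1.exp
    have h3 : K' y = Real.exp (-(c1*y^2)) * -(c1 * (2 * y^1)) := by
      rw [hK'def]; ring
    rw [h3]
    exact h2
  have hK'c : Continuous K' := by
    rw [hK'def]; fun_prop
  -- ## measurable representative of f'
  obtain ⟨f₁, hf₁sm, hf₁ae⟩ := hf'Linf.1
  set M := (eLpNorm f' ⊤ volume).toReal with hMdef
  have hM0 : 0 ≤ M := ENNReal.toReal_nonneg
  have hftop : eLpNorm f' ⊤ volume ≠ ⊤ := hf'Linf.2.ne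
  have hMae : ∀ᵐ w : ℝ, ‖f' w‖ ≤ M := by
    filter_upwards [enorm_ae_le_eLpNormEssSup f' volume] with w hw
    have h3 : eLpNormEssSup f' volume ≠ ⊤ := by
      rw [← eLpNorm_exponent_top]; exact hftop
    have h4 := ENNReal.toReal_mono h3 hw
    rw [hMdef, eLpNorm_exponent_top]
    simpa using h4
  have hf₁b : ∀ᵐ w : ℝ, ‖f₁ w‖ ≤ M := by
    filter_upwards [hMae, hf₁ae] with w h1 h2
    rw [← h2]; exact h1
  set N := {w : ℝ | ¬ ‖f₁ w‖ ≤ M} with hNdef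
  have hN : volume N = 0 := ae_iff.1 hf₁b
  have htr1 : ∀ᵐ w : ℝ, ‖f₁ (a * w)‖ ≤ M := by
    rw [ae_iff]
    refine measure_mono_null ?_ (addHaar_image_eq_zero_of_differentiableOn_of_addHaar_eq_zero
      volume ((differentiable_id.div_const a).differentiableOn (s := N)) hN)
    intro w hw
    exact ⟨a * w, hw, by field_simp; rfl⟩
  set p : ℝ → ℝ := fun w => a * f₁ (a * w) with hpdef
  have hpm : Measurable p := by
    rw [hpdef]
    exact measurable_const.mul (hf₁sm.measurable.comp (measurable_const_mul a))
  have hpb : ∀ᵐ w : ℝ, ‖p w‖ ≤ |a| * M := by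
    filter_upwards [htr1] with w hw
    rw [hpdef]
    calc ‖a * f₁ (a*w)‖ = |a| * ‖f₁ (a*w)‖ := by rw [norm_mul, Real.norm_eq_abs]
      _ ≤ |a| * M := mul_le_mul_of_nonneg_left hw (abs_nonneg a)
  set F1 : ℝ → ℝ := fun y => ∫ w in (0:ℝ)..y, p w with hF1def
  have hF1cont : Continuous F1 := by
    rw [hF1def]
    exact intervalIntegral.continuous_primitive (fun α β => aux_intInt_p hpm hpb α β) 0
  have hF1f : ∀ y, F1 y = f (a * y) := by
    intro y
    rw [hF1def]
    calc ∫ w in (0:ℝ)..y, a * f₁ (a*w) = a * ∫ w in (0:ℝ)..y, f₁ (a*w) :=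
          intervalIntegral.integral_const_mul a _
      _ = ∫ x in (0:ℝ)..(a*y), f₁ x := by
          have := intervalIntegral.smul_integral_comp_mul_left (a := (0:ℝ)) (b := y) f₁ a
          simpa using this
      _ = ∫ x in (0:ℝ)..(a*y), f' x := by
          apply intervalIntegral.integral_congr_ae
          filter_upwards [hf₁ae] with x hx _
          exact hx.symm
      _ = f (a*y) := (hf_repr _).symm
  -- ## the inverse map X
  set I : Set ℝ := Ioo (-(1/2) : ℝ) (1/2) with hIdef
  have hImeas : MeasurableSet I := hIdef ▸ measurableSet_Ioo
  have h0mem : (0:ℝ) ∈ I := by rw [hIdef]; constructor <;> norm_num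
  set X : ℝ → ℝ := fun t => Φinv (t + 1/2) with hXdef
  have hXmem : ∀ t ∈ I, Φ (X t) = t + 1/2 := by
    intro t ht
    have ht2 : t + 1/2 ∈ Ioo (0:ℝ) 1 := by
      rw [hIdef] at ht
      exact ⟨by linarith [ht.1], by linarith [ht.2]⟩
    exact hΦinv_right _ ht2
  have hX0 : X 0 = 0 := by
    have h1 : (0:ℝ) + 1/2 = Φ 0 := by rw [hΦhalf]; norm_num
    show Φinv ((0:ℝ) + 1/2) = 0
    rw [h1, hΦinv_left]
  have hXmono : MonotoneOn X I := by
    intro s hs t ht hst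
    have h2 := Φ_mono.le_iff_le (a := X s) (b := X t)
    rw [hXmem s hs, hXmem t ht] at h2
    exact h2.1 (by linarith)
  -- ## W and g'
  set W : ℝ → ℝ := fun y => (a * (p y * K y + F1 y * K' y)) / ρ y with hWdef
  set G' : ℝ → ℝ := fun t => W (X t) with hG'def
  have hparts : ∀ y, ∫ z in (0:ℝ)..y, (p z * K z + F1 z * K' z) = F1 y * K y :=
    fun y => parts_all hpm hpb hKd hK'c y
  have hWρ : ∀ y, W y * ρ y = a * (p y * K y + F1 y * K' y) :=
    fun y => div_mul_cancel₀ _ (ρ_ne y)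
  have hρK : ∀ y, ρ (a*y) = K y * ρ y := by
    intro y
    rw [hρ (a*y), hρ y]
    show _ = Real.exp (-(c1 * y^2)) * _
    have h1 : -(a*y)^2/(2*sigma^2) = (-(c1*y^2)) + (-y^2/(2*sigma^2)) := by
      rw [hc1def]; field_simp; ring
    rw [h1, Real.exp_add]; ring
  have hgt : ∀ t ∈ I, g t = a * (F1 (X t) * K (X t)) := by
    intro t ht
    rw [hg t, hν t, hν' t]
    have e1 : f (a * Φinv (t + 1/2)) = F1 (X t) := (hF1f (X t)).symm
    have e2 : ρ (a * Φinv (t + 1/2)) = K (X t) * ρ (X t) := hρK (X t)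
    rw [e1, e2]
    have h3 : ρ (Φinv (t + 1/2)) ≠ 0 := ρ_ne _
    show F1 (X t) * (K (X t) * ρ (X t)) * (a / ρ (X t)) = _
    rw [mul_div_assoc', div_eq_iff (ρ_ne (X t))]
    ring
  -- ## change of variables
  have hCoV : ∀ t ∈ I, ∫ s in (0:ℝ)..t, G' s = ∫ y in (0:ℝ)..(X t), W y * ρ y := by
    intro t ht
    have hXt := hXmem t ht
    have hder : ∀ y ∈ uIcc (0:ℝ) (X t),
        HasDerivWithinAt (fun y => Φ y - 1/2) (ρ y) (uIcc (0:ℝ) (X t)) y :=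
      fun y _ => ((Φ_deriv y).sub_const _).hasDerivWithinAt
    have hinj : InjOn (fun y => Φ y - 1/2) (uIcc (0:ℝ) (X t)) := by
      intro y1 _ y2 _ h
      simp only at h
      exact Φ_mono.injective (by linarith)
    have hΦ0 : Φ (0:ℝ) - 1/2 = 0 := by rw [hΦhalf]; norm_num
    have hΦXt : Φ (X t) - 1/2 = t := by rw [hXt]; ring
    have himg : (fun y => Φ y - 1/2) '' (uIcc (0:ℝ) (X t)) = uIcc (0:ℝ) t := by
      apply Subset.antisymm
      · rintro s ⟨y, hy, rfl⟩
        rcases mem_uIcc.1 hy with h | h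
        · refine mem_uIcc.2 (Or.inl ⟨?_, ?_⟩)
          · rw [← hΦ0]; exact sub_le_sub_right (Φ_mono.monotone h.1) _
          · rw [← hΦXt]; exact sub_le_sub_right (Φ_mono.monotone h.2) _
        · refine mem_uIcc.2 (Or.inr ⟨?_, ?_⟩)
          · rw [← hΦXt]; exact sub_le_sub_right (Φ_mono.monotone h.1) _
          · rw [← hΦ0]; exact sub_le_sub_right (Φ_mono.monotone h.2) _
      · have hcont : ContinuousOn (fun y => Φ y - 1/2) (uIcc (0:ℝ) (X t)) :=
          (Φ_diff.continuous.sub continuous_const).continuousOn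
        have h2 := intermediate_value_uIcc hcont
        rw [hΦ0, hΦXt] at h2
        exact h2
    have hiie := integral_image_eq_integral_abs_deriv_smul measurableSet_uIcc hder hinj G'
    rw [himg] at hiie
    have hint2 : ∀ y, |ρ y| • G' (Φ y - 1/2) = W y * ρ y := by
      intro y
      have hGW : G' (Φ y - 1/2) = W y := by
        show W (X (Φ y - 1/2)) = W y
        congr 1
        show Φinv (Φ y - 1/2 + 1/2) = y
        rw [sub_add_cancel, hΦinv_left]
      rw [smul_eq_mul, hGW, abs_of_pos (ρ_pos y)]
      ring
    rcases le_total (0:ℝ) (X t) with hu0 | hu0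
    · have ht0 : (0:ℝ) ≤ t := by
        have h4 := Φ_mono.monotone hu0
        rw [hΦhalf, hXt] at h4; linarith
      rw [uIcc_of_le ht0, uIcc_of_le hu0] at hiie
      rw [integral_of_le ht0, integral_of_le hu0, ← integral_Icc_eq_integral_Ioc,
        ← integral_Icc_eq_integral_Ioc, hiie]
      exact setIntegral_congr_fun measurableSet_Icc (fun y _ => hint2 y)
    · have ht0 : t ≤ (0:ℝ) := by
        have h4 := Φ_mono.monotone hu0
        rw [hΦhalf, hXt] at h4; linarith
      rw [uIcc_of_ge ht0, uIcc_of_ge hu0] at hiie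
      rw [integral_of_ge ht0, integral_of_ge hu0, ← integral_Icc_eq_integral_Ioc,
        ← integral_Icc_eq_integral_Ioc, hiie]
      exact congrArg Neg.neg (setIntegral_congr_fun measurableSet_Icc (fun y _ => hint2 y))
  have hrepr : ∀ t ∈ I, g t = ∫ s in (0:ℝ)..t, G' s := by
    intro t ht
    rw [hCoV t ht, hgt t ht]
    calc a * (F1 (X t) * K (X t))
        = a * ∫ z in (0:ℝ)..(X t), (p z * K z + F1 z * K' z) := by rw [hparts (X t)]
      _ = ∫ z in (0:ℝ)..(X t), a * (p z * K z + F1 z * K' z) :=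
          (intervalIntegral.integral_const_mul a _).symm
      _ = ∫ y in (0:ℝ)..(X t), W y * ρ y :=
          intervalIntegral.integral_congr (fun y _ => (hWρ y).symm)
  -- ## essential sup bound
  have hBAD : ∀ᵐ s : ℝ, s ∈ I → ‖f₁ (a * X s)‖ ≤ M := by
    rw [ae_iff]
    refine measure_mono_null ?_ (addHaar_image_eq_zero_of_differentiableOn_of_addHaar_eq_zero
      volume (((Φ_diff.comp (differentiable_id.div_const a)).sub_const (1/2)).differentiableOn
        (s := N)) hN)
    intro s hs
    rw [mem_setOf_eq, Classical.not_imp] at hs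
    refine ⟨a * X s, hs.2, ?_⟩
    show Φ (a * X s / a) - 1/2 = s
    rw [mul_div_cancel_left₀ _ ha0, hXmem s hs.1]
    ring
  set R0 : ℝ := Real.sqrt (2*Real.pi) * sigma * a^2 * (1 + 2/Real.exp 1 * (a^2-1)/(a^2-2))
    with hR0def
  have hR0pos : 0 < R0 := by
    have hq : 0 < 2/Real.exp 1 * (a^2-1)/(a^2-2) :=
      div_pos (mul_pos (by positivity) h21) h22
    have hA : 0 < Real.sqrt (2*Real.pi) * sigma * a^2 := by positivity
    rw [hR0def]
    nlinarith
  have hWE : ∀ y, W y = (Real.sqrt (2*Real.pi) * sigma) *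
      (a * (p y - 2*c1*y*F1 y) * Real.exp (-(c2*y^2))) := by
    intro y
    show (a * (p y * K y + F1 y * K' y)) / ρ y = _
    rw [div_eq_iff (ρ_ne y), hρ y]
    have hexp2 : Real.exp (-(c2*y^2)) * Real.exp (-y^2/(2*sigma^2)) = Real.exp (-(c1*y^2)) := by
      rw [← Real.exp_add]
      congr 1
      rw [hc1def, hc2def]; field_simp; ring
    have hKy : K y = Real.exp (-(c1*y^2)) := rfl
    have hK'y : K' y = (-(2*c1*y)) * Real.exp (-(c1*y^2)) := rfl
    rw [hKy, hK'y, ← hexp2]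
    have hs2 : sigma * Real.sqrt (2*Real.pi) ≠ 0 := by positivity
    field_simp
    ring
  have hGb : ∀ᵐ s ∂(volume.restrict I), ‖G' s‖ ≤ R0 * M := by
    rw [ae_restrict_iff' hImeas]
    filter_upwards [hBAD] with s hs hsI
    have hb : ‖f₁ (a * X s)‖ ≤ M := hs hsI
    set y := X s with hydef
    have hpyb : |p y| ≤ |a| * M := by
      have h5 : p y = a * f₁ (a * y) := rfl
      rw [h5, abs_mul]
      exact mul_le_mul_of_nonneg_left hb (abs_nonneg a)
    have hF1yb : |F1 y| ≤ |a| * M * |y| := by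
      have h5 : ‖∫ w in (0:ℝ)..y, p w‖ ≤ |a| * M * |y - 0| :=
        intervalIntegral.norm_integral_le_of_norm_le_const_ae
          (by filter_upwards [hpb] with x hx _; exact hx)
      simpa using h5
    set Ey := Real.exp (-(c2*y^2)) with hEydef
    have hEypos : 0 < Ey := Real.exp_pos _
    have hEyle : Ey ≤ 1 := by rw [hEydef, ← Real.exp_zero]; exact Real.exp_le_exp.2 (by nlinarith [sq_nonneg y])
    have hyE : y^2 * Ey ≤ 1/(c2 * Real.exp 1) := by
      have h6 := aux_ue (c2 * y^2)
      have h7 : c2 * (y^2 * Ey) ≤ (Real.exp 1)⁻¹ := by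
        rw [hEydef]
        calc c2 * (y^2 * Real.exp (-(c2*y^2)))
            = (c2*y^2) * Real.exp (-(c2*y^2)) := by ring
          _ ≤ (Real.exp 1)⁻¹ := h6
      rw [le_div_iff₀ (by positivity)]
      calc y^2 * Ey * (c2 * Real.exp 1) = (c2 * (y^2 * Ey)) * Real.exp 1 := by ring
        _ ≤ (Real.exp 1)⁻¹ * Real.exp 1 :=
            mul_le_mul_of_nonneg_right h7 (Real.exp_nonneg 1)
        _ = 1 := by field_simp
    have key : ‖W y‖ ≤ R0 * M := by
      rw [hWE y, hR0def, Real.norm_eq_abs]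
      have hS : 0 ≤ Real.sqrt (2*Real.pi) * sigma := by positivity
      calc |Real.sqrt (2*Real.pi) * sigma * (a * (p y - 2*c1*y*F1 y) * Ey)|
          = Real.sqrt (2*Real.pi) * sigma * (|a| * |p y - 2*c1*y*F1 y| * Ey) := by
            rw [abs_mul, abs_of_nonneg hS, abs_mul, abs_mul, abs_of_pos hEypos]
        _ ≤ Real.sqrt (2*Real.pi) * sigma *
            (|a| * (|a| * M + 2 * c1 * |y| * (|a| * M * |y|)) * Ey) := by
            apply mul_le_mul_of_nonneg_left _ hS
            apply mul_le_mul_of_nonneg_right _ hEypos.le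
            apply mul_le_mul_of_nonneg_left _ (abs_nonneg a)
            calc |p y - 2*c1*y*F1 y| ≤ |p y| + |2*c1*y*F1 y| := abs_sub _ _
              _ = |p y| + 2 * c1 * |y| * |F1 y| := by
                  have h8 : |2*c1*y*F1 y| = 2 * c1 * |y| * |F1 y| := by
                    rw [abs_mul (2*c1*y) (F1 y), abs_mul (2*c1) y,
                      abs_of_pos (show (0:ℝ) < 2*c1 by positivity)]
                  rw [h8]
              _ ≤ |a| * M + 2 * c1 * |y| * (|a| * M * |y|) := by
                  refine add_le_add hpyb (mul_le_mul_of_nonneg_left hF1yb ?_)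
                  positivity
        _ = Real.sqrt (2*Real.pi) * sigma * a^2 * M * (Ey + 2*c1*(y^2*Ey)) := by
            have hA2 : |a| * |a| = a^2 := by rw [← abs_mul, abs_mul_self, sq]
            have hY2 : |y| * |y| = y^2 := by rw [← abs_mul, abs_mul_self, sq]
            calc Real.sqrt (2*Real.pi) * sigma *
                (|a| * (|a| * M + 2 * c1 * |y| * (|a| * M * |y|)) * Ey)
                = Real.sqrt (2*Real.pi) * sigma * ((|a| * |a|) * M * Ey)
                  + Real.sqrt (2*Real.pi) * sigma
                    * (2 * c1 * ((|y| * |y|) * ((|a| * |a|) * M * Ey))) := by ring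
              _ = Real.sqrt (2*Real.pi) * sigma * a^2 * M * (Ey + 2*c1*(y^2*Ey)) := by
                  rw [hA2, hY2]; ring
        _ ≤ Real.sqrt (2*Real.pi) * sigma * a^2 * M * (1 + 2*c1*(1/(c2*Real.exp 1))) := by
            apply mul_le_mul_of_nonneg_left _ (by positivity)
            exact add_le_add hEyle (mul_le_mul_of_nonneg_left hyE (by positivity))
        _ = Real.sqrt (2*Real.pi) * sigma * a^2 * (1 + 2/Real.exp 1 * (a^2-1)/(a^2-2)) * M := by
            rw [hc1def, hc2def]
            have he : Real.exp 1 ≠ 0 := (Real.exp_pos 1).ne'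
            field_simp
    exact key
  -- ## conclusion
  have hg0 : g 0 = 0 := by
    rw [hg 0, hν 0]
    have h9 : Φinv ((0:ℝ) + 1/2) = 0 := hX0
    rw [h9]
    simp [hf0]
  refine ⟨hg0, G', fun t ht => ⟨?_, hrepr t ht⟩, ?_⟩
  · have hsub : uIoc (0:ℝ) t ⊆ I :=
      (uIoc_subset_uIcc (a := (0:ℝ)) (b := t)).trans
        (Set.ordConnected_Ioo.uIcc_subset h0mem ht)
    rw [intervalIntegrable_iff]
    haveI : IsFiniteMeasure (volume.restrict (uIoc (0:ℝ) t)) :=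
      ⟨by rw [Measure.restrict_apply_univ]; exact measure_Ioc_lt_top⟩
    apply Integrable.mono' (integrable_const (R0 * M))
    · have hXmono2 : MonotoneOn X (uIoc (0:ℝ) t) :=
        fun s1 h1 s2 h2 h12 => hXmono (hsub h1) (hsub h2) h12
      have hXae : AEMeasurable X (volume.restrict (uIoc (0:ℝ) t)) :=
        aemeasurable_restrict_of_monotoneOn measurableSet_uIoc hXmono2
      have hKm : Measurable K := by rw [hKdef]; fun_prop
      have hWm : Measurable W := by
        rw [hWdef]
        exact (measurable_const.mul ((hpm.mul hKm).add
          (hF1cont.measurable.mul hK'c.measurable))).div ρ_cont.measurable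
      exact (hWm.comp_aemeasurable hXae).aestronglyMeasurable
    · exact ae_restrict_of_ae_restrict_of_subset hsub hGb
  · rw [eLpNorm_exponent_top]
    refine le_trans (eLpNormEssSup_le_of_ae_bound hGb) ?_
    rw [ENNReal.ofReal_mul hR0pos.le]
    have h10 : ENNReal.ofReal M = eLpNorm f' ⊤ volume := ENNReal.ofReal_toReal hftop
    rw [h10]
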